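/- Let $n, \alpha \geq 2$ and let $R$ be a commutative ring with unity such that $n!$ is not a zero-divisor in $R$. Let $A \in M_n(R)$. If $X \in M_n(R)$ satisfies $AX - XA = X^{\alpha}$, then $X$ is a nilpotent matrix. -/

import Mathlib

open Polynomial Matrix Module

section aux

lemma trace_map' {S T : Type*} [CommRing S] [CommRing T] {n : Type*} [Fintype n]
    (f : S →+* T) (M : Matrix n n S) : (M.map f).trace = f M.trace := by
  simp [Matrix.trace, Matrix.diag, map_sum, Matrix.map_apply]

lemma map_pow' {S T : Type*} [CommRing S] [CommRing T] {n : Type*} [Fintype n] [DecidableEq n]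
    (f : S →+* T) (M : Matrix n n S) (k : ℕ) : (M ^ k).map f = (M.map f) ^ k := by
  have h1 : (M ^ k).map f = f.mapMatrix (M ^ k) := rfl
  rw [h1, map_pow, RingHom.mapMatrix_apply]

open Polynomial Matrix Module

lemma trace_restrict_pow {K V : Type*} [Field K] [AddCommGroup V] [Module K V]
    [FiniteDimensional K V] (f : Module.End K V) (μ : K) (k : ℕ)
    (hk : Set.MapsTo (f ^ k) (f.maxGenEigenspace μ) (f.maxGenEigenspace μ)) :
    LinearMap.trace K (f.maxGenEigenspace μ) ((f ^ k).restrict hk)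
      = μ ^ k * (finrank K (f.maxGenEigenspace μ) : K) := by
  have h1 : ∀ x ∈ f.maxGenEigenspace μ, f x ∈ f.maxGenEigenspace μ := fun x hx =>
    Module.End.mapsTo_maxGenEigenspace_of_comm (Commute.refl f) μ hx
  have hgk : (f ^ k).restrict hk = (f.restrict h1) ^ k := (Module.End.pow_restrict k h1).symm
  rw [hgk]
  have hnilg : IsNilpotent (f.restrict h1
      - algebraMap K (Module.End K (f.maxGenEigenspace μ)) μ) := by
    have hsub : Set.MapsTo (⇑(f - algebraMap K (Module.End K V) μ))
        (f.maxGenEigenspace μ) (f.maxGenEigenspace μ) := by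
      intro x hx
      have hx' : x ∈ f.maxGenEigenspace μ := hx
      have h2 : (f - algebraMap K (Module.End K V) μ) x = f x - μ • x := by
        simp [LinearMap.sub_apply, Module.algebraMap_end_apply]
      show (f - algebraMap K (Module.End K V) μ) x ∈ f.maxGenEigenspace μ
      rw [h2]
      exact Submodule.sub_mem _ (h1 x hx') (Submodule.smul_mem _ μ hx')
    obtain ⟨N, hN⟩ := Module.End.isNilpotent_restrict_maxGenEigenspace_sub_algebraMap f μ hsub
    refine ⟨N, ?_⟩
    have heq : f.restrict h1 - algebraMap K (Module.End K (f.maxGenEigenspace μ)) μ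
        = (f - algebraMap K (Module.End K V) μ).restrict hsub := by
      apply LinearMap.ext
      intro x
      apply Subtype.ext
      change _ = (f - algebraMap K (Module.End K V) μ) (x : V)
      simp [LinearMap.restrict_coe_apply, LinearMap.sub_apply,
        Module.algebraMap_end_apply]
    rw [heq]
    exact hN
  have trg : ∀ m : ℕ, LinearMap.trace K (f.maxGenEigenspace μ) ((f.restrict h1) ^ m)
      = μ ^ m * (finrank K (f.maxGenEigenspace μ) : K) := by
    intro m
    induction m with
    | zero => simp [LinearMap.trace_one]
    | succ m ih =>
      have h3 : f.restrict h1 ^ (m + 1) = ((f.restrict h1) ^ m) ∘ₗ (f.restrict h1) := by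
        rw [pow_succ, Module.End.mul_eq_comp]
      rw [h3, LinearMap.trace_comp_eq_mul_of_commute_of_isNilpotent μ
        ((Commute.refl (f.restrict h1)).pow_left m) hnilg, ih]
      ring
  exact trg k


/-- Over an algebraically closed field in which `1, ..., n` are nonzero, an `n × n` matrix
all of whose power traces vanish is nilpotent. -/
lemma core_field {n : ℕ} {K : Type*} [Field K] [IsAlgClosed K]
    (hchar : ∀ d : ℕ, 1 ≤ d → d ≤ n → (d : K) ≠ 0)
    (M : Matrix (Fin n) (Fin n) K)
    (htr : ∀ k : ℕ, 1 ≤ k → Matrix.trace (M ^ k) = 0) :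
    IsNilpotent M := by
  classical
  suffices hnil : IsNilpotent (Matrix.toLinAlgEquiv' M) by
    obtain ⟨N, hN⟩ := hnil
    refine ⟨N, ?_⟩
    apply (Matrix.toLinAlgEquiv' (R := K) (n := Fin n)).injective
    rw [map_pow, map_zero]
    exact hN
  set f : Module.End K (Fin n → K) := Matrix.toLinAlgEquiv' M with hf
  have htrf : ∀ k : ℕ, LinearMap.trace K (Fin n → K) (f ^ k) = Matrix.trace (M ^ k) := by
    intro k
    have h1 : f ^ k = Matrix.toLin' (M ^ k) := by
      rw [hf, ← map_pow]
      rfl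
    rw [h1, LinearMap.trace_eq_matrix_trace K (Pi.basisFun K (Fin n)),
      LinearMap.toMatrix_eq_toMatrix', LinearMap.toMatrix'_toLin']
  have htop : ⨆ μ, f.maxGenEigenspace μ = ⊤ := Module.End.iSup_maxGenEigenspace_eq_top f
  have hds := DirectSum.isInternal_submodule_of_iSupIndep_of_iSup_eq_top
      f.independent_maxGenEigenspace htop
  have hfin : {μ | f.maxGenEigenspace μ ≠ ⊥}.Finite :=
    WellFoundedGT.finite_ne_bot_of_iSupIndep f.independent_maxGenEigenspace
  have hmap : ∀ (k : ℕ) (μ : K),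
      Set.MapsTo (f ^ k) (f.maxGenEigenspace μ) (f.maxGenEigenspace μ) := fun k μ =>
    Module.End.mapsTo_maxGenEigenspace_of_comm ((Commute.refl f).pow_right k) μ
  have hsum : ∀ k : ℕ, 1 ≤ k →
      ∑ μ ∈ hfin.toFinset, μ ^ k * (finrank K (f.maxGenEigenspace μ) : K) = 0 := by
    intro k hk
    have h0 := LinearMap.trace_eq_sum_trace_restrict' hds hfin (hmap k)
    simp only [trace_restrict_pow] at h0
    rw [← h0, htrf, htr k hk]
  -- Vandermonde step
  set t := hfin.toFinset.erase 0 with ht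
  set r := t.card with hr
  set e : Fin r ≃ {x // x ∈ t} := t.equivFin.symm with he
  set v : Fin r → K := fun i => ((e i : {x // x ∈ t}) : K) with hv
  have hvt : ∀ i, v i ∈ t := fun i => (e i).2
  have hv0 : ∀ i, v i ≠ 0 := fun i => Finset.ne_of_mem_erase (hvt i)
  have hvinj : Function.Injective v := fun i j hij => by
    apply e.injective
    exact Subtype.ext hij
  have eq2 : ∀ k : ℕ, 1 ≤ k →
      ∑ i : Fin r, v i ^ k * (finrank K (f.maxGenEigenspace (v i)) : K) = 0 := by
    intro k hk
    have h1 : ∑ μ ∈ t, μ ^ k * (finrank K (f.maxGenEigenspace μ) : K) = 0 := by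
      rw [← hsum k hk]
      apply Finset.sum_subset (Finset.erase_subset _ _)
      intro x hx hnx
      have hx0 : x = 0 := by
        by_contra hxx
        exact hnx (Finset.mem_erase.mpr ⟨hxx, hx⟩)
      rw [hx0, zero_pow (by omega), zero_mul]
    rw [← h1, ← Finset.sum_coe_sort t
      (fun μ => μ ^ k * (finrank K (f.maxGenEigenspace μ) : K))]
    exact Fintype.sum_equiv e
      (fun i => v i ^ k * (finrank K (f.maxGenEigenspace (v i)) : K))
      (fun x => (x : K) ^ k * (finrank K (f.maxGenEigenspace (x : K)) : K)) (fun i => rfl)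
  set d : Fin r → K := fun i => (finrank K (f.maxGenEigenspace (v i)) : K) with hd
  set B : Matrix (Fin r) (Fin r) K := Matrix.of (fun i j => v j ^ ((i : ℕ) + 1)) with hB
  have hBd : B *ᵥ d = 0 := by
    funext i
    simp only [Matrix.mulVec, dotProduct, hB, Matrix.of_apply, Pi.zero_apply, hd]
    exact eq2 ((i : ℕ) + 1) (by omega)
  have hdet : B.det ≠ 0 := by
    have hBe : B = (Matrix.diagonal v * Matrix.vandermonde v)ᵀ := by
      ext i j
      simp [hB, Matrix.transpose_apply, Matrix.diagonal_mul, Matrix.vandermonde, pow_succ']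
    rw [hBe, Matrix.det_transpose, Matrix.det_mul, Matrix.det_diagonal,
      Matrix.det_vandermonde]
    apply mul_ne_zero
    · exact Finset.prod_ne_zero_iff.mpr fun i _ => hv0 i
    · apply Finset.prod_ne_zero_iff.mpr
      intro i _
      apply Finset.prod_ne_zero_iff.mpr
      intro j hj
      have hji : j ≠ i := fun hji => by
        rw [hji] at hj
        exact absurd hj (by simp)
      exact sub_ne_zero.mpr fun hvv => hji (hvinj hvv)
  have hd0 : d = 0 := Matrix.eq_zero_of_mulVec_eq_zero hdet hBd
  have htempty : t = ∅ := by
    rw [← Finset.not_nonempty_iff_eq_empty]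
    rintro ⟨μ0, hμ0⟩
    set i := e.symm ⟨μ0, hμ0⟩ with hi
    have hzero : d i = 0 := by rw [hd0]; rfl
    have hWne : f.maxGenEigenspace (v i) ≠ ⊥ := by
      have h2 := Finset.mem_of_mem_erase (hvt i)
      rwa [Set.Finite.mem_toFinset] at h2
    have hnt : Nontrivial (f.maxGenEigenspace (v i)) :=
      Submodule.nontrivial_iff_ne_bot.mpr hWne
    have hpos : 0 < finrank K (f.maxGenEigenspace (v i)) := Module.finrank_pos
    have hle : finrank K (f.maxGenEigenspace (v i)) ≤ n := by
      have h3 := Submodule.finrank_le (f.maxGenEigenspace (v i))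
      have h4 : finrank K (Fin n → K) = n := Module.finrank_fin_fun K
      omega
    exact hchar _ hpos hle hzero
  have hW0 : f.maxGenEigenspace 0 = ⊤ := by
    rw [eq_top_iff, ← htop]
    apply iSup_le
    intro μ
    by_cases hμ : μ = 0
    · rw [hμ]
    · have hbot : f.maxGenEigenspace μ = ⊥ := by
        by_contra hb
        have hmem : μ ∈ t := Finset.mem_erase.mpr ⟨hμ, hfin.mem_toFinset.mpr hb⟩
        rw [htempty] at hmem
        exact absurd hmem (Finset.notMem_empty μ)
      rw [hbot]
      exact bot_le
  have h3 : ∀ m : Fin n → K, ∃ N : ℕ, (f ^ N) m = 0 := by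
    intro m
    have hm : m ∈ f.maxGenEigenspace 0 := hW0 ▸ Submodule.mem_top
    obtain ⟨kk, hkk⟩ := (Module.End.mem_maxGenEigenspace f 0 m).mp hm
    exact ⟨kk, by simpa using hkk⟩
  exact ((LinearMap.charpoly_nilpotent_tfae f).out 2 0).mp h3

/-- Over a commutative ring in which `n!` is a unit, an `n × n` matrix all of whose power
traces vanish is nilpotent. -/
lemma key_ring {n : ℕ} {S : Type*} [CommRing S]
    (hu : IsUnit ((n.factorial : ℕ) : S))
    (M : Matrix (Fin n) (Fin n) S) (htr : ∀ k : ℕ, 1 ≤ k → Matrix.trace (M ^ k) = 0) :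
    IsNilpotent M := by
  classical
  rcases subsingleton_or_nontrivial S with hS | hS
  · exact ⟨1, Subsingleton.elim _ _⟩
  set p := M.charpoly with hp
  have hdeg : p.natDegree = n := by
    rw [hp, Matrix.charpoly_natDegree_eq_dim, Fintype.card_fin]
  have hco : ∀ i : ℕ, i ≠ n → IsNilpotent (p.coeff i) := by
    intro i hi
    rcases lt_or_gt_of_ne hi with hia | hib
    swap
    · rw [Polynomial.coeff_eq_zero_of_natDegree_lt (by omega)]
      exact IsNilpotent.zero
    rw [← mem_nilradical, nilradical_eq_sInf, Ideal.mem_sInf]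
    intro P hP
    have hPP : P.IsPrime := hP
    set π := Ideal.Quotient.mk P with hπ
    have hM' : IsNilpotent (M.map π) := by
      set D := S ⧸ P with hD
      set F := FractionRing D with hF
      set K := AlgebraicClosure F with hK
      set ψ : D →+* K := (algebraMap F K).comp (algebraMap D F) with hψdef
      have hψ : Function.Injective ψ :=
        (RingHom.injective (algebraMap F K)).comp (IsFractionRing.injective D F)
      have hnilK : IsNilpotent ((M.map π).map ψ) := by
        apply core_field
        · intro dd h1 h2
          have hdvd : ((dd : ℕ) : S) ∣ ((n.factorial : ℕ) : S) :=
            Nat.cast_dvd_cast (Nat.dvd_factorial h1 h2)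
          have hu1 : IsUnit ((dd : ℕ) : S) := isUnit_of_dvd_unit hdvd hu
          have hu2 := (hu1.map π).map ψ
          rw [map_natCast, map_natCast] at hu2
          exact hu2.ne_zero
        · intro k hk
          rw [← map_pow', ← map_pow', _root_.trace_map', _root_.trace_map', htr k hk, map_zero, map_zero]
      obtain ⟨N, hN⟩ := hnilK
      refine ⟨N, ?_⟩
      rw [← map_pow'] at hN
      ext i j
      apply hψ
      have h4 : ((M.map π ^ N).map ψ) i j = (0 : Matrix (Fin n) (Fin n) K) i j := by
        rw [hN]
      simpa [Matrix.map_apply] using h4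
    have hred : (M.map π).charpoly = X ^ n := by
      have h2 := Matrix.isNilpotent_charpoly_sub_pow_of_isNilpotent hM'
      have h3 : (M.map π).charpoly - X ^ Fintype.card (Fin n) = 0 := h2.eq_zero
      rw [Fintype.card_fin] at h3
      exact sub_eq_zero.mp h3
    have h5 : π (p.coeff i) = 0 := by
      rw [hp, ← Polynomial.coeff_map, ← Matrix.charpoly_map, hred,
        Polynomial.coeff_X_pow, if_neg hi]
    exact Ideal.Quotient.eq_zero_iff_mem.mp h5
  have hq : IsNilpotent ((X : S[X]) ^ n - p) := by
    rw [Polynomial.isNilpotent_iff]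
    intro i
    by_cases hi : i = n
    · subst hi
      have h1 : p.coeff i = 1 := by
        have h2 := (Matrix.charpoly_monic M).coeff_natDegree
        rw [← hp] at h2
        rwa [hdeg] at h2
      simp [Polynomial.coeff_X_pow, h1]
    · rw [Polynomial.coeff_sub, Polynomial.coeff_X_pow, if_neg hi, zero_sub]
      exact (hco i hi).neg
  have hMn : M ^ n = Polynomial.aeval M ((X : S[X]) ^ n - p) := by
    rw [map_sub, hp, Matrix.aeval_self_charpoly, sub_zero, map_pow, Polynomial.aeval_X]
  have hnilMn : IsNilpotent (M ^ n) := hMn ▸ hq.map (Polynomial.aeval M)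
  obtain ⟨N, hN⟩ := hnilMn
  exact ⟨n * N, by rwa [pow_mul]⟩

end aux

/-- Let `n, α ≥ 2` and `R` a commutative ring in which `n!` is not a
zero-divisor. If `A, X ∈ Mₙ(R)` satisfy `AX - XA = Xᵅ`, then `X` is nilpotent. -/
theorem stmt9 (n α : ℕ) (hn : 2 ≤ n) (hα : 2 ≤ α)
    (R : Type*) [CommRing R]
    (hfac : (n.factorial : R) ∈ nonZeroDivisors R)
    (A X : Matrix (Fin n) (Fin n) R)
    (h : A * X - X * A = X ^ α) :
    IsNilpotent X := by
  classical
  rcases subsingleton_or_nontrivial R with hS | hS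
  · exact ⟨1, Subsingleton.elim _ _⟩
  set R' := Localization.Away ((n.factorial : ℕ) : R) with hR'
  set φ : R →+* R' := algebraMap R R' with hφ
  have hinj : Function.Injective φ :=
    IsLocalization.injective R' (Submonoid.powers_le.mpr hfac)
  have hunit : IsUnit ((n.factorial : ℕ) : R') := by
    have h1 := IsLocalization.Away.algebraMap_isUnit (S := R') ((n.factorial : ℕ) : R)
    rwa [map_natCast] at h1
  set A' := A.map φ with hA'
  set X' := X.map φ with hX'
  have h' : A' * X' - X' * A' = X' ^ α := by
    have h1 : φ.mapMatrix (A * X - X * A) = φ.mapMatrix (X ^ α) := congrArg _ h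
    simpa [map_sub, _root_.map_mul, map_pow, RingHom.mapMatrix_apply] using h1
  have lemA : ∀ k : ℕ, A' * X' ^ (k + 1) - X' ^ (k + 1) * A'
      = ((k : R') + 1) • (X' ^ α * X' ^ k) := by
    intro k
    induction k with
    | zero => simp [h']
    | succ k ih =>
      have e1 : A' * X' ^ (k + 2) - X' ^ (k + 2) * A'
          = (A' * X' ^ (k + 1) - X' ^ (k + 1) * A') * X'
            + X' ^ (k + 1) * (A' * X' - X' * A') := by
        have e0 : X' ^ (k + 2) = X' ^ (k + 1) * X' := by rw [pow_succ]
        rw [e0]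
        simp only [mul_sub, sub_mul, mul_assoc]
        abel
      rw [e1, ih, h']
      have e2 : X' ^ (k + 1) * X' ^ α = X' ^ α * X' ^ (k + 1) := by
        rw [← pow_add, ← pow_add, add_comm]
      rw [smul_mul_assoc, mul_assoc, ← pow_succ, e2]
      push_cast
      conv_rhs => rw [add_smul, one_smul]
  have trB : ∀ k : ℕ, ((k : R') + 1) * Matrix.trace (X' ^ (α + k)) = 0 := by
    intro k
    have h0 : Matrix.trace (A' * X' ^ (k + 1) - X' ^ (k + 1) * A') = 0 := by
      rw [Matrix.trace_sub, Matrix.trace_mul_comm, sub_self]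
    rw [lemA k, Matrix.trace_smul, smul_eq_mul, ← pow_add] at h0
    exact h0
  have hkunit : ∀ k : ℕ, 1 ≤ k → k ≤ n → IsUnit ((k : ℕ) : R') :=
    fun k h1 h2 => isUnit_of_dvd_unit (Nat.cast_dvd_cast (Nat.dvd_factorial h1 h2)) hunit
  have hRnt : Nontrivial R' := ⟨⟨φ 0, φ 1, fun hh => zero_ne_one (α := R) (hinj hh)⟩⟩
  have claim1 : ∀ m : ℕ, α ≤ m → Matrix.trace (X' ^ m) = 0 := by
    intro m
    induction m using Nat.strong_induction_on with
    | _ m IH =>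
      intro hm
      have hb := trB (m - α)
      rw [Nat.add_sub_cancel' hm] at hb
      by_cases hcase : m - α + 1 ≤ n
      · have hu2 : IsUnit (((m - α : ℕ) : R') + 1) := by
          have h1 := hkunit (m - α + 1) (by omega) hcase
          rwa [Nat.cast_add, Nat.cast_one] at h1
        exact (hu2.mul_right_eq_zero).mp hb
      · have hmn : n ≤ m := by omega
        have hma : α ≤ m - n := by omega
        set p := X'.charpoly with hp
        have hdeg : p.natDegree = n := by
          rw [hp, Matrix.charpoly_natDegree_eq_dim, Fintype.card_fin]
        have hCH : (0 : Matrix (Fin n) (Fin n) R')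
            = ∑ i ∈ Finset.range (n + 1), p.coeff i • X' ^ i := by
          have h1 := Polynomial.aeval_eq_sum_range (x := X') (p := p)
          rw [hdeg] at h1
          rw [hp, Matrix.aeval_self_charpoly] at h1
          exact h1
        have h2 : Matrix.trace (X' ^ (m - n) * (0 : Matrix (Fin n) (Fin n) R')) = 0 := by
          simp
        rw [hCH, Finset.mul_sum] at h2
        have h3 : ∀ i ∈ Finset.range (n + 1),
            X' ^ (m - n) * (p.coeff i • X' ^ i) = p.coeff i • X' ^ (m - n + i) := by
          intro i _
          rw [mul_smul_comm, ← pow_add]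
        rw [Finset.sum_congr rfl h3, Matrix.trace_sum, Finset.sum_range_succ] at h2
        have h4 : ∀ i ∈ Finset.range n, Matrix.trace (p.coeff i • X' ^ (m - n + i)) = 0 := by
          intro i hi
          have hilt : i < n := Finset.mem_range.mp hi
          rw [Matrix.trace_smul, IH (m - n + i) (by omega) (by omega), smul_zero]
        have h5 : p.coeff n = 1 := by
          have h6 := (Matrix.charpoly_monic X').coeff_natDegree
          rw [← hp] at h6
          rwa [hdeg] at h6
        rw [Finset.sum_eq_zero h4, zero_add, h5, one_smul, Nat.sub_add_cancel hmn] at h2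
        exact h2
  have hX'nil : IsNilpotent X' := by
    have hY : IsNilpotent (X' ^ α) := by
      apply key_ring hunit
      intro k hk
      rw [← pow_mul]
      exact claim1 (α * k) (Nat.le_mul_of_pos_right α (by omega))
    obtain ⟨N, hN⟩ := hY
    exact ⟨α * N, by rwa [pow_mul]⟩
  obtain ⟨N, hN⟩ := hX'nil
  refine ⟨N, ?_⟩
  ext i j
  apply hinj
  have h7 : ((X ^ N).map φ) i j = (0 : Matrix (Fin n) (Fin n) R') i j := by
    rw [map_pow' φ X N, ← hX', hN]
  simpa [Matrix.map_apply] using h7
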